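/- Let n = p^μ be a prime power with p ≥ 7, μ ≥ 2, and n ≥ 289. Let b, c be integers with 3 ≤ b, c = b + 1 < n/2, such that (1, 1, c, n−b, n−3) is a minimal zero-sum sequence over Z/n. Then the minimum over units m modulo n of |m|_n + |m|_n + |m·c|_n + |m·(n−b)|_n + |m·(n−3)|_n equals 2n if and only if c = (n−1)/2; otherwise this minimum equals n. -/

import Mathlib

/-- `lpr n x` is the least positive residue of `x` modulo `n` (in `[1, n]`). -/
def lpr (n x : ℕ) : ℕ := if x % n = 0 then n else x % n


set_option maxHeartbeats 1000000

/-- Direct crossing bound: `3*(mv+mu) < n`. -/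
lemma crossA (n c mu tu mv T1 : ℕ) (hn289 : 289 ≤ n) (h3n : ¬ (3:ℕ) ∣ n)
    (hc4 : 4 ≤ c) (hcltn : c < n)
    (hI1 : mu * (T1 + tu) + mv * tu = n)
    (hI2 : (c * mv) % n = T1 + tu)
    (htu : 1 ≤ tu) (hT1 : 1 ≤ T1) (hmu2 : 2 ≤ mu) (hmu3 : tu ≤ 2 → 3 ≤ mu)
    (hmv9 : mv = 1 ∨ 3 ≤ mv) (hmvtv : mv ≤ T1 + tu) :
    3*(mv+mu) < n := by
  have hmv1 : 1 ≤ mv := by rcases hmv9 with h|h <;> omega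
  have hI1z : (mu:ℤ) * ((T1:ℤ) + tu) + (mv:ℤ) * tu = n := by exact_mod_cast hI1
  have hmu2' : (2:ℤ) ≤ mu := by exact_mod_cast hmu2
  have hmv1' : (1:ℤ) ≤ mv := by exact_mod_cast hmv1
  have htu' : (1:ℤ) ≤ tu := by exact_mod_cast htu
  have hT1' : (1:ℤ) ≤ T1 := by exact_mod_cast hT1
  rcases Nat.lt_or_ge tu 3 with h2 | h2
  · -- tu ≤ 2
    have hmu3' : 3 ≤ mu := hmu3 (by omega)
    have hmu3z : (3:ℤ) ≤ mu := by exact_mod_cast hmu3'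
    have h2z : (tu:ℤ) ≤ 2 := by exact_mod_cast (by omega : tu ≤ 2)
    by_contra hcon
    push_neg at hcon  -- n ≤ 3*(mv+mu)
    have hconz : (n:ℤ) ≤ 3*((mv:ℤ) + mu) := by exact_mod_cast hcon
    -- S1 : mu*(T1+tu-3) + mv*(tu-3) ≤ 0
    have hS1 : (mu:ℤ)*((T1:ℤ)+tu-3) + (mv:ℤ)*((tu:ℤ)-3) ≤ 0 := by linarith [hI1z, hconz]
    rcases hmv9 with hmv1'' | hmv3
    · -- mv = 1 → T1 + tu = c
      have htvc : T1 + tu = c := by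
        rw [hmv1'', mul_one] at hI2
        rw [← hI2, Nat.mod_eq_of_lt hcltn]
      have h30 : (4:ℤ) ≤ (T1:ℤ)+tu := by exact_mod_cast (htvc ▸ hc4 : 4 ≤ T1 + tu)
      rw [hmv1''] at hS1
      push_cast at hS1
      nlinarith [hS1, mul_le_mul hmu3z (by linarith : (1:ℤ) ≤ (T1:ℤ)+tu-3) (by norm_num) (by linarith)]
    · -- mv ≥ 3
      have hmv3z : (3:ℤ) ≤ mv := by exact_mod_cast hmv3
      rcases Nat.lt_or_ge (T1 + tu) 4 with h4 | h4
      · -- T1+tu = 3, mv = 3: contradiction via 3c ≡ 3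
        have htv3 : T1 + tu = 3 := by omega
        have hmv3' : mv = 3 := by omega
        rw [hmv3', htv3] at hI2
        have h5 := Nat.div_add_mod (c*3) n
        rw [hI2] at h5
        have hd : n ∣ 3*(c-1) := by
          refine ⟨(c*3)/n, ?_⟩
          have e : 3*(c-1) + 3 = c*3 := by omega
          linarith [h5]
        have hcop3 : Nat.Coprime n 3 :=
          Nat.Coprime.symm ((Nat.Prime.coprime_iff_not_dvd Nat.prime_three).mpr h3n)
        have hd2 : n ∣ (c-1) := hcop3.dvd_of_dvd_mul_left hd
        have := Nat.le_of_dvd (by omega) hd2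
        omega
      · -- tv ≥ 4
        have h42 : (4:ℤ) ≤ (T1:ℤ)+tu := by exact_mod_cast h4
        have h43 : (mv:ℤ) ≤ (T1:ℤ)+tu := by exact_mod_cast hmvtv
        have hn289' : (289:ℤ) ≤ n := by exact_mod_cast hn289
        set tvz : ℤ := (T1:ℤ) + tu with htvz
        have s1 : (mu:ℤ)*(tvz-3) ≤ 2*mv := by nlinarith [hS1]
        have s2 : tvz ≤ 9 := by
          nlinarith [s1, h43, mul_nonneg (by linarith : (0:ℤ) ≤ (mu:ℤ)-3) (by linarith : (0:ℤ) ≤ tvz-3)]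
        have s3 : (mv:ℤ) ≤ 9 := by linarith
        have s4 : (mu:ℤ) ≤ 18 := by
          nlinarith [s1, mul_nonneg (by linarith : (0:ℤ) ≤ (mu:ℤ)) (by linarith : (0:ℤ) ≤ tvz-4)]
        have f1 : (mu:ℤ)*tvz ≤ 18*9 := by
          have := mul_le_mul s4 s2 (by linarith) (by norm_num)
          linarith
        have f2 : (mv:ℤ)*tu ≤ 9*2 := by
          have := mul_le_mul s3 h2z (by linarith) (by norm_num)
          linarith
        nlinarith [hI1z, f1, f2]
  · -- tu ≥ 3 : easy
    have h20 : (3:ℤ) ≤ tu := by exact_mod_cast h2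
    have q1 : (2:ℤ)*1 ≤ (mu:ℤ)*((T1:ℤ)+tu-3) := by
      apply mul_le_mul hmu2' (by linarith) (by norm_num) (by linarith)
    have q2 : (0:ℤ) ≤ (mv:ℤ)*((tu:ℤ)-3) := mul_nonneg (by linarith) (by linarith)
    have : 3*((mv:ℤ) + mu) < n := by nlinarith [hI1z, q1, q2]
    exact_mod_cast this

/-- Rescue inequality, case `tu < T1` (k = 1). -/
lemma rescueA (n mu tu mv T1 : ℕ) (hn289 : 289 ≤ n)
    (hI1 : mu * T1 + (mv + mu) * tu = n)
    (htu : 1 ≤ tu) (h7 : 7 ≤ T1) (htuT1 : tu < T1)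
    (hmu2 : 2 ≤ mu) (hmu3 : tu ≤ 2 → 3 ≤ mu)
    (hmv1 : 1 ≤ mv) (hmvtv : mv ≤ T1 + tu) :
    3 * ((mv + mu) * (T1 - tu)) < n * (T1 - 3) := by
  have hI1z : (mu:ℤ) * T1 + ((mv:ℤ) + mu) * tu = n := by exact_mod_cast hI1
  have h7' : (7:ℤ) ≤ T1 := by exact_mod_cast h7
  have htu' : (1:ℤ) ≤ tu := by exact_mod_cast htu
  have htuT1' : (tu:ℤ) < T1 := by exact_mod_cast htuT1
  have hmu2' : (2:ℤ) ≤ mu := by exact_mod_cast hmu2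
  have hmv1' : (1:ℤ) ≤ mv := by exact_mod_cast hmv1
  zify [show tu ≤ T1 from le_of_lt htuT1, show 3 ≤ T1 by omega]
  have e : (T1:ℤ)*((mu:ℤ)*((T1:ℤ)-3) + ((mv:ℤ)+mu)*((tu:ℤ)-3))
      = (n:ℤ)*((T1:ℤ)-3) - 3*(((mv:ℤ)+mu)*((T1:ℤ)-tu)) := by
    linear_combination ((T1:ℤ)-3) * hI1z
  rcases Nat.lt_or_ge tu 3 with h2 | h2
  · -- tu ≤ 2 : contradiction with n ≥ 289 if inequality fails
    have hmu3' : 3 ≤ mu := hmu3 (by omega)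
    have hmu3z : (3:ℤ) ≤ mu := by exact_mod_cast hmu3'
    have h2z : (tu:ℤ) ≤ 2 := by exact_mod_cast (by omega : tu ≤ 2)
    by_contra hcon
    push_neg at hcon
    -- hcon : n*(T1-3) ≤ 3*((mv+mu)*(T1-tu))
    have hS1 : (mu:ℤ)*((T1:ℤ)-3) + ((mv:ℤ)+mu)*((tu:ℤ)-3) ≤ 0 := by
      nlinarith [e, hcon]
    have hT2 : (mu:ℤ)*((T1:ℤ)-5) ≤ 2*mv := by
      nlinarith [hS1, mul_nonneg (by linarith : (0:ℤ) ≤ (mv:ℤ)+mu) (by linarith : (0:ℤ) ≤ (tu:ℤ)-1)]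
    have hmvT : (mv:ℤ) ≤ (T1:ℤ) + 2 := by
      have : (mv:ℤ) ≤ (T1:ℤ) + tu := by exact_mod_cast hmvtv
      linarith
    have ht119 : (T1:ℤ) ≤ 19 := by
      nlinarith [hT2, hmvT, mul_nonneg (by linarith : (0:ℤ) ≤ (mu:ℤ)-3) (by linarith : (0:ℤ) ≤ (T1:ℤ)-5)]
    have hmu9 : (mu:ℤ) ≤ 9 := by
      by_contra h9
      push_neg at h9
      nlinarith [hT2, hmvT, mul_le_mul (by linarith : (10:ℤ) ≤ mu) (le_refl ((T1:ℤ)-5))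
        (by linarith) (by linarith)]
    have hmv21 : (mv:ℤ) ≤ 21 := by linarith
    have hn289' : (289:ℤ) ≤ n := by exact_mod_cast hn289
    have f1 : (mu:ℤ)*T1 ≤ 9*19 := by
      have := mul_le_mul hmu9 ht119 (by linarith) (by norm_num)
      linarith
    have f2 : ((mv:ℤ)+mu)*tu ≤ 30*2 := by
      have := mul_le_mul (by linarith : (mv:ℤ)+mu ≤ 30) h2z (by linarith) (by norm_num)
      linarith
    linarith [hI1z, f1, f2]
  · -- tu ≥ 3 : direct positivity
    have h20 : (3:ℤ) ≤ tu := by exact_mod_cast h2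
    have q1 : (2:ℤ)*4 ≤ (mu:ℤ)*((T1:ℤ)-3) := by
      apply mul_le_mul hmu2' (by linarith) (by norm_num) (by linarith)
    have q2 : (0:ℤ) ≤ ((mv:ℤ)+mu)*((tu:ℤ)-3) := mul_nonneg (by linarith) (by linarith)
    nlinarith [e, q1, q2, h7']

/-- Rescue inequality, case `T1 ≤ tu` (k ≥ 2). -/
lemma rescueB (n M1 T1 t2 mu tu : ℕ)
    (hI1 : mu * T1 + M1 * tu = n)
    (h7 : 7 ≤ T1) (hT1tu : T1 ≤ tu) (ht2 : t2 + 1 ≤ T1) (hM1 : 1 ≤ M1) :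
    3 * (M1 * t2) < n * (T1 - 3) := by
  have hI1z : (mu:ℤ) * T1 + (M1:ℤ) * tu = n := by exact_mod_cast hI1
  have h7' : (7:ℤ) ≤ T1 := by exact_mod_cast h7
  have hT1tu' : (T1:ℤ) ≤ tu := by exact_mod_cast hT1tu
  have ht2' : (t2:ℤ) + 1 ≤ T1 := by exact_mod_cast ht2
  have hM1' : (1:ℤ) ≤ M1 := by exact_mod_cast hM1
  have ht20 : (0:ℤ) ≤ t2 := by positivity
  have hmu0 : (0:ℤ) ≤ mu := by positivity
  zify [show 3 ≤ T1 by omega]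
  -- n ≥ M1*T1
  have h5 : (M1:ℤ) * T1 ≤ n := by
    nlinarith [hI1z, mul_nonneg hmu0 (by linarith : (0:ℤ) ≤ (T1:ℤ)),
      mul_le_mul_of_nonneg_left hT1tu' (by linarith : (0:ℤ) ≤ (M1:ℤ))]
  -- M1*T1*(T1-3) > 3*M1*t2
  have h8 : 3*((M1:ℤ)*t2) ≤ 3*((M1:ℤ)*((T1:ℤ)-1)) := by
    have := mul_le_mul_of_nonneg_left (by linarith : (t2:ℤ) ≤ (T1:ℤ)-1) (by linarith : (0:ℤ) ≤ 3*(M1:ℤ))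
    nlinarith [this]
  have h9 : (10:ℤ) ≤ (T1:ℤ)*(T1:ℤ) - 6*(T1:ℤ) + 3 := by nlinarith [mul_nonneg (by linarith : (0:ℤ) ≤ (T1:ℤ)-7) (by linarith : (0:ℤ) ≤ (T1:ℤ)+1)]
  have h10 : (M1:ℤ)*((T1:ℤ)*(T1:ℤ) - 6*(T1:ℤ) + 3) ≥ 10 := by
    nlinarith [mul_le_mul hM1' (le_refl ((T1:ℤ)*(T1:ℤ) - 6*(T1:ℤ) + 3)) (by linarith) (by linarith)]
  have h11 : (M1:ℤ)*T1*((T1:ℤ)-3) ≥ 3*((M1:ℤ)*((T1:ℤ)-1)) + 10 := by nlinarith [h10]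
  have h12 : (n:ℤ)*((T1:ℤ)-3) ≥ (M1:ℤ)*T1*((T1:ℤ)-3) := by
    nlinarith [mul_le_mul_of_nonneg_right h5 (by linarith : (0:ℤ) ≤ (T1:ℤ)-3)]
  linarith


set_option maxHeartbeats 1000000 in
lemma descend_lemma (p n c : ℕ) (hp : p.Prime) (hp7 : 7 ≤ p)
    (hn289 : 289 ≤ n) (hpn : p ∣ n) (h3n : ¬ (3:ℕ) ∣ n)
    (hc4 : 4 ≤ c) (hcn : 2*c + 3 ≤ n) :
    ∀ (fuel mu tu mv tv : ℕ),
      tu + tv ≤ fuel →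
      mu * tv + mv * tu = n →
      (c * mv) % n = tv →
      (c * mu) % n = n - tu →
      1 ≤ tu → 1 ≤ tv →
      2 ≤ mu → (tu ≤ 2 → 3 ≤ mu) →
      (mv = 1 ∨ 3 ≤ mv) →
      mv ≤ tv →
      Nat.gcd tu tv = 1 → Nat.gcd mu mv = 1 →
      ∃ m t : ℕ, 1 ≤ t ∧ t < m ∧ 3*m < n ∧ ¬ p ∣ m ∧ (c * m) % n = t := by
  have hn0 : 0 < n := by omega
  have hcltn : c < n := by omega
  intro fuel
  induction fuel with
  | zero =>
    intro mu tu mv tv h _ _ _ htu _ _ _ _ _ _ _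
    omega
  | succ f ih =>
    intro mu tu mv tv hfuel hI1 hI2 hI3 htu htv hmu2 hmu3 hmv9 hmvtv hgt hgm
    have hmv1 : 1 ≤ mv := by rcases hmv9 with h|h <;> omega
    have htvn : tv < n := by rw [← hI2]; exact Nat.mod_lt _ hn0
    have htun : tu < n := by
      have h1 : 2*tv ≤ mu*tv := Nat.mul_le_mul_right tv hmu2
      have h2 : 1*tu ≤ mv*tu := Nat.mul_le_mul_right tu hmv1
      linarith [hI1]
    rcases Nat.lt_trichotomy tu tv with hvu | heq | huv
    · -- tu < tv : V-direction step
      obtain ⟨T1, rfl⟩ : ∃ T1, tv = T1 + tu := ⟨tv - tu, by omega⟩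
      have hT1 : 1 ≤ T1 := by omega
      have hI2p : (c * (mv + mu)) % n = T1 := by
        have h1 : c * (mv + mu) = c*mv + c*mu := by ring
        rw [h1, Nat.add_mod, hI2, hI3]
        have h3 : (T1 + tu) + (n - tu) = n + T1 := by omega
        rw [h3, Nat.add_mod_left, Nat.mod_eq_of_lt (by omega)]
      have hI1p : mu * T1 + (mv + mu) * tu = n := by
        have e1 : mu * T1 + (mv + mu) * tu = mu * (T1 + tu) + mv * tu := by ring
        rw [e1]; exact hI1
      have hgtp : Nat.gcd tu T1 = 1 := Nat.coprime_add_self_right.mp hgt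
      have hgmp : Nat.gcd mu (mv + mu) = 1 := Nat.coprime_add_self_right.mpr hgm
      by_cases hcross : mv + mu ≤ T1
      · -- no crossing: recurse
        exact ih mu tu (mv + mu) T1 (by omega) hI1p hI2p hI3 htu (by omega)
          hmu2 hmu3 (Or.inr (by omega)) hcross hgtp hgmp
      · -- crossing
        push_neg at hcross   -- T1 < mv + mu
        by_cases hpm : p ∣ (mv + mu)
        · -- rescue
          have hpt1 : p ∣ T1 := by
            have h1 : p ∣ c * (mv + mu) := Dvd.dvd.mul_left hpm c
            exact hI2p ▸ ((Nat.dvd_mod_iff hpn).mpr h1)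
          have h7 : 7 ≤ T1 := le_trans hp7 (Nat.le_of_dvd (by omega) hpt1)
          have hpmu : ¬ p ∣ mu := by
            intro h
            have h2 : p ∣ (mv + mu) - mu := Nat.dvd_sub hpm h
            rw [Nat.add_sub_cancel] at h2
            have h3 : p ∣ Nat.gcd mu mv := Nat.dvd_gcd h h2
            rw [hgm] at h3
            have := Nat.le_of_dvd one_pos h3
            omega
          have hρlt : tu % T1 < T1 := Nat.mod_lt _ (by omega)
          have hρ1 : 1 ≤ tu % T1 := by
            rcases Nat.eq_zero_or_pos (tu % T1) with h0 | h
            · exfalso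
              have hd : T1 ∣ tu := Nat.dvd_of_mod_eq_zero h0
              have h1 : T1 ∣ Nat.gcd tu T1 := Nat.dvd_gcd hd dvd_rfl
              rw [hgtp] at h1
              have := Nat.le_of_dvd one_pos h1
              omega
            · exact h
          obtain ⟨t2, ht2e⟩ : ∃ t2, T1 = t2 + tu % T1 := ⟨T1 - tu % T1, by omega⟩
          have ht2a : 1 ≤ t2 := by omega
          have ht2b : t2 + 1 ≤ T1 := by omega
          have hdm := Nat.div_add_mod tu T1
          have hkt1 : (tu / T1 + 1) * T1 = tu + t2 := by
            have h1 : (tu / T1 + 1) * T1 = T1 * (tu/T1) + T1 := by ring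
            linarith [hdm, h1, ht2e]
          have hmod2 : (c * ((tu / T1 + 1) * (mv + mu) + mu)) % n = t2 := by
            have hA : c * (mv + mu) ≡ T1 [MOD n] := by
              unfold Nat.ModEq
              rw [hI2p, Nat.mod_eq_of_lt (by omega : T1 < n)]
            have hB : c * mu ≡ n - tu [MOD n] := by
              unfold Nat.ModEq
              rw [hI3, Nat.mod_eq_of_lt (by omega : n - tu < n)]
            have hC : c * ((tu / T1 + 1) * (mv + mu) + mu)
                ≡ (tu / T1 + 1) * T1 + (n - tu) [MOD n] := by
              have h1 : c * ((tu / T1 + 1) * (mv + mu) + mu)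
                  = (tu / T1 + 1) * (c * (mv + mu)) + c * mu := by ring
              rw [h1]
              exact Nat.ModEq.add (hA.mul_left _) hB
            have h2 : (tu / T1 + 1) * T1 + (n - tu) = n + t2 := by omega
            rw [h2] at hC
            calc (c * ((tu / T1 + 1) * (mv + mu) + mu)) % n = (n + t2) % n := hC
              _ = t2 % n := by rw [Nat.add_mod_left]
              _ = t2 := Nat.mod_eq_of_lt (by omega)
          have hkey2 : 3 * ((mv + mu) * t2) < n * (T1 - 3) := by
            rcases Nat.lt_or_ge tu T1 with hk1 | hk2
            · -- tu < T1 : ρ = tu, t2 = T1 - tu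
              have hρtu : tu % T1 = tu := Nat.mod_eq_of_lt hk1
              have ht2c : T1 - tu = t2 := by omega
              have := rescueA n mu tu mv T1 hn289 hI1p htu h7 hk1 hmu2 hmu3 hmv1
                (by omega)
              rwa [ht2c] at this
            · exact rescueB n (mv + mu) T1 t2 mu tu hI1p h7 hk2 ht2b (by omega)
          have h3m2 : 3 * ((tu / T1 + 1) * (mv + mu) + mu) < n := by
            have hid : T1 * ((tu / T1 + 1) * (mv + mu) + mu) = n + (mv + mu) * t2 := by
              have e : T1 * ((tu / T1 + 1) * (mv + mu) + mu)
                  = ((tu / T1 + 1) * T1) * (mv + mu) + T1 * mu := by ring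
              rw [hkt1] at e
              have e2 : (tu + t2)*(mv + mu) + T1*mu = (mu*T1 + (mv+mu)*tu) + (mv+mu)*t2 := by ring
              rw [e2] at e
              rw [e, hI1p]
            have h3 : T1 * (3*((tu / T1 + 1) * (mv + mu) + mu)) < T1 * n := by
              have e4 : T1 * (3*((tu / T1 + 1) * (mv + mu) + mu))
                  = 3*n + 3*((mv + mu)*t2) := by
                calc T1 * (3*((tu / T1 + 1) * (mv + mu) + mu))
                    = 3*(T1 * ((tu / T1 + 1) * (mv + mu) + mu)) := by ring
                  _ = 3*(n + (mv+mu)*t2) := by rw [hid]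
                  _ = 3*n + 3*((mv+mu)*t2) := by ring
              rw [e4]
              calc 3*n + 3*((mv+mu)*t2) < 3*n + n*(T1-3) := by omega
                _ = n*(3 + (T1-3)) := by ring
                _ = n*T1 := by rw [show 3 + (T1-3) = T1 by omega]
                _ = T1*n := by ring
            exact Nat.lt_of_mul_lt_mul_left h3
          have hpm2 : ¬ p ∣ ((tu / T1 + 1) * (mv + mu) + mu) := by
            intro h
            have h1 : p ∣ (tu / T1 + 1) * (mv + mu) := Dvd.dvd.mul_left hpm _
            have h2 := Nat.dvd_sub h h1
            rw [Nat.add_sub_cancel_left] at h2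
            exact hpmu h2
          refine ⟨(tu / T1 + 1) * (mv + mu) + mu, t2, ht2a, ?_, h3m2, hpm2, hmod2⟩
          calc t2 ≤ T1 := by omega
            _ < mv + mu := hcross
            _ ≤ (tu / T1 + 1) * (mv + mu) := Nat.le_mul_of_pos_left _ (Nat.succ_pos _)
            _ < (tu / T1 + 1) * (mv + mu) + mu := by omega
        · -- direct witness
          exact ⟨mv + mu, T1, by omega, hcross, crossA n c mu tu mv T1 hn289 h3n hc4 hcltn
            hI1 hI2 htu hT1 hmu2 hmu3 hmv9 hmvtv, hpm, hI2p⟩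
    · -- tu = tv : impossible
      exfalso
      have h1 : tv = 1 := by
        rw [heq, Nat.gcd_self] at hgt
        exact hgt
      have h2 : mv = 1 := by omega
      rw [h2, mul_one] at hI2
      rw [Nat.mod_eq_of_lt hcltn] at hI2
      omega
    · -- tv < tu : U-direction step
      obtain ⟨TU, rfl⟩ : ∃ TU, tu = TU + tv := ⟨tu - tv, by omega⟩
      have hTU : 1 ≤ TU := by omega
      have hI3p : (c * (mu + mv)) % n = n - TU := by
        have h1 : c * (mu + mv) = c*mu + c*mv := by ring
        rw [h1, Nat.add_mod, hI3, hI2]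
        have h3 : (n - (TU + tv)) + tv = n - TU := by omega
        rw [h3, Nat.mod_eq_of_lt (by omega)]
      have hI1pp : (mu + mv) * tv + mv * TU = n := by
        have e1 : (mu + mv) * tv + mv * TU = mu*tv + mv*(TU + tv) := by ring
        rw [e1]; exact hI1
      have hgtpp : Nat.gcd TU tv = 1 := Nat.coprime_add_self_left.mp hgt
      have hgmpp : Nat.gcd (mu + mv) mv = 1 := Nat.coprime_add_self_left.mpr hgm
      exact ih (mu + mv) TU mv tv (by omega) hI1pp hI2 hI3p hTU htv
        (by omega) (fun _ => by omega) hmv9 hmvtv hgtpp hgmpp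

set_option maxHeartbeats 1000000 in
lemma exists_witness (p μ n c : ℕ) (hp : p.Prime) (hp7 : 7 ≤ p) (hμ : 2 ≤ μ)
    (hn : n = p ^ μ) (hn289 : 289 ≤ n) (hc4 : 4 ≤ c) (hcn : 2*c + 3 ≤ n) :
    ∃ m t : ℕ, 1 ≤ t ∧ t < m ∧ 3*m < n ∧ ¬ p ∣ m ∧ (c * m) % n = t := by
  have hn0 : 0 < n := by omega
  have hpn : p ∣ n := hn ▸ dvd_pow_self p (by omega)
  have h3n : ¬ (3:ℕ) ∣ n := by
    intro h
    rw [hn] at h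
    have h2 : (3:ℕ) ∣ p := Nat.Prime.dvd_of_dvd_pow Nat.prime_three h
    have h3 : 3 = p := (Nat.prime_dvd_prime_iff_eq Nat.prime_three hp).mp h2
    omega
  by_cases hpc : p ∣ c
  · -- p ∣ c : explicit construction
    have hgc : Nat.gcd c n ∣ c := Nat.gcd_dvd_left _ _
    have hgn : Nat.gcd c n ∣ n := Nat.gcd_dvd_right _ _
    have hpg : p ∣ Nat.gcd c n := Nat.dvd_gcd hpc hpn
    obtain ⟨j, hjμ, hgj⟩ := (Nat.dvd_prime_pow hp).mp (hn ▸ hgn)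
    rw [← hn] at hgj
    set g := Nat.gcd c n with hgdef
    have hg1 : 7 ≤ g := le_trans hp7 (Nat.le_of_dvd (Nat.gcd_pos_of_pos_right c hn0) hpg)
    have hj1 : 1 ≤ j := by
      rcases Nat.eq_zero_or_pos j with h0 | h
      · exfalso; rw [h0, pow_zero] at hgj; omega
      · exact h
    have hjlt : j < μ := by
      by_contra h
      have hjm : j = μ := by omega
      rw [hjm, ← hn] at hgj
      have h1 : n ∣ c := hgj ▸ hgc
      have := Nat.le_of_dvd (by omega) h1
      omega
    set P2 := p ^ (μ - j) with hP2def
    have hgP2 : g * P2 = n := by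
      rw [hgj, hP2def, ← pow_add, hn]
      congr 1
      omega
    have hpP2 : p ∣ P2 := dvd_pow_self p (by omega)
    have hP21 : 7 ≤ P2 := le_trans hp7 (Nat.le_of_dvd (by positivity) hpP2)
    have hg7n : 7 * g ≤ n := by
      have h1 : 7 * g ≤ p * g := Nat.mul_le_mul_right g hp7
      have h2 : p * g = p ^ (j+1) := by rw [hgj]; ring
      have h3 : p ^ (j+1) ≤ p ^ μ := Nat.pow_le_pow_right (by omega) (by omega)
      rw [← hn] at h3
      omega
    have hP27n : 7 * P2 ≤ n := by
      have h1 : 7 * P2 ≤ p * P2 := Nat.mul_le_mul_right P2 hp7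
      have h2 : p * P2 = p ^ (μ - j + 1) := by rw [hP2def]; ring
      have h3 : p ^ (μ - j + 1) ≤ p ^ μ := Nat.pow_le_pow_right (by omega) (by omega)
      rw [← hn] at h3
      omega
    set c0 := c / g with hc0def
    have hc0 : c0 * g = c := Nat.div_mul_cancel hgc
    have hc0pos : 1 ≤ c0 :=
      Nat.pos_of_ne_zero (fun h => by rw [h, zero_mul] at hc0; omega)
    have hpc0 : ¬ p ∣ c0 := by
      intro hdvd
      obtain ⟨c1, hc1⟩ := hdvd
      have hdc : p^(j+1) ∣ c := ⟨c1, by rw [← hc0, hc1, hgj]; ring⟩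
      have hdn : p^(j+1) ∣ n := by rw [hn]; exact pow_dvd_pow p (by omega)
      have h1 : p^(j+1) ∣ g := Nat.dvd_gcd hdc hdn
      have h2 : p^(j+1) ≤ g := Nat.le_of_dvd (by omega) h1
      rw [hgj] at h2
      have h3 : p^j < p^(j+1) := Nat.pow_lt_pow_succ (by omega)
      omega
    have hcopc0 : Nat.Coprime c0 P2 :=
      Nat.Coprime.pow_right _ ((hp.coprime_iff_not_dvd.mpr hpc0).symm)
    obtain ⟨b0, -, hb0⟩ := Nat.exists_mul_mod_eq_one_of_coprime hcopc0 (by omega)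
    -- hb0 : c0 * b0 % P2 = 1
    have hm0mul : c0 * (b0 % P2) % P2 = 1 :=
      Eq.trans (Nat.ModEq.mul_left c0 (Nat.mod_modEq b0 P2)) hb0
    set m0 := b0 % P2 with hm0def
    have hm0P2 : m0 < P2 := Nat.mod_lt _ (by omega)
    have hm01 : 1 ≤ m0 := by
      by_contra h
      have h1 : m0 = 0 := by omega
      rw [h1, mul_zero, Nat.zero_mod] at hm0mul
      omega
    -- choose m
    obtain ⟨m, hmgt, hmle, hmmod⟩ :
        ∃ m, g < m ∧ m ≤ g + P2 ∧ c0 * m % P2 = 1 := by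
      by_cases hcase : g < m0
      · exact ⟨m0, hcase, by omega, hm0mul⟩
      · push_neg at hcase  -- m0 ≤ g
        refine ⟨m0 + P2 * ((g - m0)/P2 + 1), ?_, ?_, ?_⟩
        · have hdm2 := Nat.div_add_mod (g - m0) P2
          have hlt := Nat.mod_lt (g - m0) (show 0 < P2 by omega)
          have e : P2*((g-m0)/P2 + 1) = P2*((g-m0)/P2) + P2 := by ring
          omega
        · have hdm2 := Nat.div_add_mod (g - m0) P2
          have e : P2*((g-m0)/P2 + 1) = P2*((g-m0)/P2) + P2 := by ring
          omega
        · have e : c0*(m0 + P2*((g-m0)/P2+1)) = c0*m0 + (c0*((g-m0)/P2+1))*P2 := by ring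
          rw [e, Nat.add_mul_mod_self_right, hm0mul]
    have hpm : ¬ p ∣ m := by
      intro hdvd
      have h1 : p ∣ c0 * m := Dvd.dvd.mul_left hdvd c0
      have h2 : p ∣ P2 * (c0*m / P2) := Dvd.dvd.mul_right hpP2 _
      have h3 := Nat.div_add_mod (c0*m) P2
      rw [hmmod] at h3
      have h4 := Nat.dvd_sub h1 h2
      have e : c0*m - P2*(c0*m/P2) = 1 := by omega
      rw [e] at h4
      have := Nat.le_of_dvd one_pos h4
      omega
    have hmod : c * m % n = g := by
      have h3 := Nat.div_add_mod (c0*m) P2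
      rw [hmmod] at h3
      have e1 : c0 * m = 1 + P2 * (c0*m/P2) := by omega
      have e : c * m = g + (c0*m/P2) * n := by
        calc c * m = (c0 * m) * g := by rw [← hc0]; ring
          _ = (1 + P2 * (c0*m/P2)) * g := by rw [← e1]
          _ = g + (c0*m/P2) * (g * P2) := by ring
          _ = g + (c0*m/P2) * n := by rw [hgP2]
      rw [e, Nat.add_mul_mod_self_right]
      exact Nat.mod_eq_of_lt (by omega)
    exact ⟨m, g, by omega, hmgt, by omega, hpm, hmod⟩
  · -- p ∤ c : descent
    have hcop : Nat.Coprime c n := by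
      rw [hn]
      exact Nat.Coprime.pow_right μ ((hp.coprime_iff_not_dvd.mpr hpc).symm)
    have hdm : c * (n / c) + n % c = n := Nat.div_add_mod n c
    have hr1 : 1 ≤ n % c := by
      rcases Nat.eq_zero_or_pos (n % c) with h0 | h
      · exfalso
        have h1 : c ∣ n := Nat.dvd_of_mod_eq_zero h0
        have h2 : Nat.gcd c n = c := Nat.gcd_eq_left h1
        rw [hcop] at h2
        omega
      · exact h
    have hq2 : 2 ≤ n / c := (Nat.le_div_iff_mul_le (by omega : 0 < c)).mpr (by omega)
    have hq3 : n % c ≤ 2 → 3 ≤ n / c := by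
      intro hr2
      by_contra h
      have hq : n / c = 2 := by omega
      rw [hq] at hdm
      omega
    exact descend_lemma p n c hp hp7 hn289 hpn h3n hc4 hcn (n % c + c) (n / c) (n % c) 1 c
      le_rfl
      (by have e : (n/c)*c + 1*(n%c) = c*(n/c) + n%c := by ring
          rw [e]; exact hdm)
      (by rw [mul_one]; exact Nat.mod_eq_of_lt (by omega))
      (by have e : c * (n/c) = n - n % c := by omega
          rw [e]; exact Nat.mod_eq_of_lt (by omega))
      hr1 (by omega) hq2 hq3 (Or.inl rfl) (by omega)
      (by have := Nat.gcd_rec c n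
          rw [hcop] at this
          exact this.symm)
      (Nat.gcd_one_right _)

lemma lpr_pos (n x : ℕ) (hn : 0 < n) : 0 < lpr n x := by
  unfold lpr; split <;> omega

lemma lpr_modeq (n x : ℕ) : lpr n x ≡ x [MOD n] := by
  unfold lpr
  split
  · next h => unfold Nat.ModEq; rw [Nat.mod_self, h]
  · exact Nat.mod_modEq x n

lemma two_cases (n u a : ℕ) (ha : a < n) (hu : u % n = a) (hub : u < 2*n) :
    u = a ∨ u = n + a := by
  have hdm := Nat.div_add_mod u n
  rw [hu] at hdm
  match h : u / n with
  | 0 => left; rw [h] at hdm; omega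
  | 1 => right; rw [h] at hdm; omega
  | (k+2) =>
    exfalso
    rw [h] at hdm
    have h1 : n * 2 ≤ n * (k+2) := Nat.mul_le_mul_left n (by omega)
    linarith

lemma lpr_eq (n x : ℕ) (h : x % n ≠ 0) : lpr n x = x % n := if_neg h


set_option maxHeartbeats 1000000 in
theorem stmt11_aux (p μ n b c : ℕ) (hp : p.Prime) (hp7 : 7 ≤ p) (hμ : 2 ≤ μ)
    (hn : n = p ^ μ) (hn289 : 289 ≤ n)
    (hb : 3 ≤ b) (hbc : c = b + 1) (hc : 2 * c < n) :
    IsLeast {S : ℕ | ∃ m : ℕ, Nat.gcd m n = 1 ∧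
        S = lpr n m + lpr n m + lpr n (m * c) + lpr n (m * (n - b)) +
          lpr n (m * (n - 3))}
      (if c = (n - 1) / 2 then 2 * n else n) := by
  have hn0 : 0 < n := by omega
  have hnodd : n % 2 = 1 := by
    have ho : Odd n := by rw [hn]; exact (hp.odd_of_ne_two (by omega)).pow
    rw [Nat.odd_iff] at ho; exact ho
  have hbn : b < n := by omega
  have hcn : c < n := by omega
  -- key sum identity : 1+1+c+(n-b)+(n-3) = 2*n
  have hsum5 : 1 + 1 + c + (n - b) + (n - 3) = 2 * n := by omega
  constructor
  · -- membership
    by_cases hcc : c = (n - 1) / 2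
    · rw [if_pos hcc]
      refine ⟨1, Nat.gcd_one_left n, ?_⟩
      simp only [one_mul]
      have l1 : lpr n 1 = 1 := by
        rw [lpr_eq n 1 (by rw [Nat.mod_eq_of_lt (by omega)]; omega), Nat.mod_eq_of_lt (by omega)]
      have l2 : lpr n c = c := by
        rw [lpr_eq n c (by rw [Nat.mod_eq_of_lt hcn]; omega), Nat.mod_eq_of_lt hcn]
      have l3 : lpr n (n - b) = n - b := by
        rw [lpr_eq n (n-b) (by rw [Nat.mod_eq_of_lt (by omega)]; omega),
          Nat.mod_eq_of_lt (by omega)]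
      have l4 : lpr n (n - 3) = n - 3 := by
        rw [lpr_eq n (n-3) (by rw [Nat.mod_eq_of_lt (by omega)]; omega),
          Nat.mod_eq_of_lt (by omega)]
      rw [l1, l2, l3, l4]
      omega
    · rw [if_neg hcc]
      have hcn3 : 2 * c + 3 ≤ n := by omega
      obtain ⟨m, t, ht1, htm, h3m, hpm, hmod⟩ :=
        exists_witness p μ n c hp hp7 hμ hn hn289 (by omega) hcn3
      have hmn : m < n := by omega
      refine ⟨m, ?_, ?_⟩
      · rw [hn]
        exact Nat.Coprime.pow_right μ ((hp.coprime_iff_not_dvd.mpr hpm).symm)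
      · have hmc : m * c % n = t := by rw [mul_comm]; exact hmod
        have l1 : lpr n m = m := by
          rw [lpr_eq n m (by rw [Nat.mod_eq_of_lt hmn]; omega), Nat.mod_eq_of_lt hmn]
        have l2 : lpr n (m*c) = t := by rw [lpr_eq n (m*c) (by rw [hmc]; omega), hmc]
        -- lpr n (m*(n-b)) = m - t
        have key : m*(n-b) + m*c = m*n + m := by
          have e1 : (n - b) + c = n + 1 := by omega
          calc m*(n-b) + m*c = m*((n-b) + c) := by ring
            _ = m*(n+1) := by rw [e1]
            _ = m*n + m := by ring
        have hdm := Nat.div_add_mod (m*c) n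
        rw [hmc] at hdm
        have hem : m*c/n < m := by
          by_contra hx
          push_neg at hx   -- m ≤ m*c/n
          have h1 : n * m ≤ n * (m*c/n) := Nat.mul_le_mul_left n hx
          have h2 : m * c ≤ m * (n-1) := Nat.mul_le_mul_left m (by omega)
          have h3 : m * (n-1) = m*n - m := by
            have : m * (n-1) + m = m * n := by
              calc m*(n-1) + m = m*((n-1) + 1) := by ring
                _ = m * n := by rw [show (n-1)+1 = n by omega]
            omega
          have h4 : n * (m*c/n) ≤ m*c := by omega
          have h5 : n * m = m * n := by ring
          omega
        have e4 : m*(n-b) = n*(m - m*c/n) + (m - t) := by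
          zify [show b ≤ n from le_of_lt hbn, show m*c/n ≤ m from le_of_lt hem,
            show t ≤ m from le_of_lt htm]
          have hz1 : (m:ℤ)*((n:ℤ)-(b:ℤ)) + (m:ℤ)*(c:ℤ) = (m:ℤ)*(n:ℤ) + m := by
            have h := key
            zify [show b ≤ n from le_of_lt hbn] at h
            linarith
          have hz2 : (n:ℤ)*((m*c/n : ℕ):ℤ) + (t:ℤ) = (m:ℤ)*(c:ℤ) := by exact_mod_cast hdm
          linarith
        have e5 : m*(n-b) % n = m - t := by
          rw [e4, Nat.mul_add_mod, Nat.mod_eq_of_lt (by omega)]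
        have l3 : lpr n (m*(n-b)) = m - t := by
          rw [lpr_eq n (m*(n-b)) (by rw [e5]; omega), e5]
        have e6 : m*(n-3) = n*(m-1) + (n - 3*m) := by
          zify [show (3:ℕ) ≤ n by omega, show 1 ≤ m by omega,
            show 3*m ≤ n from le_of_lt h3m]
          ring
        have e7 : m*(n-3) % n = n - 3*m := by
          rw [e6, Nat.mul_add_mod, Nat.mod_eq_of_lt (by omega)]
        have l4 : lpr n (m*(n-3)) = n - 3*m := by
          rw [lpr_eq n (m*(n-3)) (by rw [e7]; omega), e7]
        rw [l1, l2, l3, l4]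
        omega
  · -- lower bound
    rintro S ⟨m, hgcd, rfl⟩
    have hndm : ¬ n ∣ m := by
      intro h
      have h1 : n ∣ Nat.gcd m n := Nat.dvd_gcd h dvd_rfl
      rw [hgcd] at h1
      have := Nat.le_of_dvd one_pos h1
      omega
    have hcopnm : Nat.Coprime n m := Nat.Coprime.symm hgcd
    -- the sum is a positive multiple of n
    have hmodeq : (lpr n m + lpr n m + lpr n (m*c) + lpr n (m*(n-b)) + lpr n (m*(n-3)))
        ≡ m + m + m*c + m*(n-b) + m*(n-3) [MOD n] :=
      ((((lpr_modeq n m).add (lpr_modeq n m)).add (lpr_modeq n (m*c))).add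
        (lpr_modeq n (m*(n-b)))).add (lpr_modeq n (m*(n-3)))
    have hraw : m + m + m*c + m*(n-b) + m*(n-3) = (m*2)*n := by
      calc m + m + m*c + m*(n-b) + m*(n-3) = m*(1+1+c+(n-b)+(n-3)) := by ring
        _ = m*(2*n) := by rw [hsum5]
        _ = (m*2)*n := by ring
    have hmod0 : (lpr n m + lpr n m + lpr n (m*c) + lpr n (m*(n-b)) + lpr n (m*(n-3)))
        % n = 0 := by
      have h1 := hmodeq
      unfold Nat.ModEq at h1
      rw [h1, hraw, Nat.mul_mod_left]
    have hTpos : 0 < lpr n m + lpr n m + lpr n (m*c) + lpr n (m*(n-b)) + lpr n (m*(n-3)) := by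
      have := lpr_pos n m hn0
      omega
    have hTn : n ≤ lpr n m + lpr n m + lpr n (m*c) + lpr n (m*(n-b)) + lpr n (m*(n-3)) :=
      Nat.le_of_dvd hTpos (Nat.dvd_of_mod_eq_zero hmod0)
    by_cases hcc : c = (n - 1) / 2
    · rw [if_pos hcc]
      by_contra hcon
      push_neg at hcon  -- sum < 2n
      have hTeqn : lpr n m + lpr n m + lpr n (m*c) + lpr n (m*(n-b)) + lpr n (m*(n-3))
          = n := by
        rcases two_cases n _ 0 (by omega) hmod0 (by omega) with h | h
        · omega
        · omega
      -- parity contradiction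
      have h2c : 2*c = n - 1 := by omega
      have ha1 : 1 ≤ m % n := by
        rcases Nat.eq_zero_or_pos (m % n) with h0 | h
        · exact absurd (Nat.dvd_of_mod_eq_zero h0) hndm
        · exact h
      have han : m % n < n := Nat.mod_lt _ hn0
      have l1 : lpr n m = m % n := lpr_eq n m (by omega)
      have ht2n0 : (m*c) % n ≠ 0 := by
        intro h
        have h1 : n ∣ m * c := Nat.dvd_of_mod_eq_zero h
        have h2 : n ∣ c := hcopnm.dvd_of_dvd_mul_left h1
        have := Nat.le_of_dvd (by omega) h2
        omega
      have ht3n0 : (m*(n-b)) % n ≠ 0 := by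
        intro h
        have h1 : n ∣ m * (n-b) := Nat.dvd_of_mod_eq_zero h
        have h2 : n ∣ (n-b) := hcopnm.dvd_of_dvd_mul_left h1
        have := Nat.le_of_dvd (by omega) h2
        omega
      have ht4n0 : (m*(n-3)) % n ≠ 0 := by
        intro h
        have h1 : n ∣ m * (n-3) := Nat.dvd_of_mod_eq_zero h
        have h2 : n ∣ (n-3) := hcopnm.dvd_of_dvd_mul_left h1
        have := Nat.le_of_dvd (by omega) h2
        omega
      have l2 : lpr n (m*c) = (m*c) % n := lpr_eq _ _ ht2n0
      have l3 : lpr n (m*(n-b)) = (m*(n-b)) % n := lpr_eq _ _ ht3n0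
      have l4 : lpr n (m*(n-3)) = (m*(n-3)) % n := lpr_eq _ _ ht4n0
      have hsumn : m % n + m % n + (m*c) % n + (m*(n-b)) % n + (m*(n-3)) % n = n := by
        rw [l1, l2, l3, l4] at hTeqn
        exact hTeqn
      have ht2lt : (m*c) % n < n := Nat.mod_lt _ hn0
      have ht3lt : (m*(n-b)) % n < n := Nat.mod_lt _ hn0
      have ht4lt : (m*(n-3)) % n < n := Nat.mod_lt _ hn0
      -- t2 + t3 ≡ a
      have hu : ((m*c) % n + (m*(n-b)) % n) % n = m % n := by
        have e : m*c + m*(n-b) = n*m + m := by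
          have e1 : c + (n - b) = n + 1 := by omega
          calc m*c + m*(n-b) = m*(c + (n-b)) := by ring
            _ = m*(n+1) := by rw [e1]
            _ = n*m + m := by ring
        calc ((m*c) % n + (m*(n-b)) % n) % n = (m*c + m*(n-b)) % n := by
              conv_rhs => rw [Nat.add_mod]
          _ = (n*m + m) % n := by rw [e]
          _ = m % n := by rw [Nat.mul_add_mod]
      have hucase : (m*c) % n + (m*(n-b)) % n = m % n ∨
          (m*c) % n + (m*(n-b)) % n = n + m % n :=
        two_cases n _ _ han hu (by omega)
      rcases hucase with hu1 | hu2
      swap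
      · omega
      have h3a : 3 * (m % n) + (m*(n-3)) % n = n := by omega
      -- 2*t2 ≡ n - a
      have h2t2 : (2*((m*c) % n)) % n = n - m % n := by
        have e1 : (2*((m*c) % n)) % n = (2*(m*c)) % n := Nat.ModEq.mul_left 2 (Nat.mod_modEq _ n)
        have e2 : 2*(m*c) = m*(n-1) := by
          calc 2*(m*c) = m*(2*c) := by ring
            _ = m*(n-1) := by rw [h2c]
        have e3 : (m*(n-1)) % n = ((m % n)*(n-1)) % n :=
          (Nat.ModEq.mul_right (n-1) (Nat.mod_modEq m n)).symm
        have e4 : (m % n)*(n-1) = n*(m % n - 1) + (n - m % n) := by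
          zify [show 1 ≤ n by omega, ha1, le_of_lt han]
          ring
        rw [e1, e2, e3, e4, Nat.mul_add_mod, Nat.mod_eq_of_lt (by omega)]
      have ht2a : (m*c) % n < m % n := by omega
      have h2t2case : 2*((m*c) % n) = n - m % n ∨ 2*((m*c) % n) = n + (n - m % n) :=
        two_cases n _ _ (by omega) h2t2 (by omega)
      rcases h2t2case with h | h <;> omega
    · rw [if_neg hcc]
      exact hTn

theorem stmt_11 (p μ n b c : ℕ) (hp : p.Prime) (hp7 : 7 ≤ p) (hμ : 2 ≤ μ)
    (hn : n = p ^ μ) (hn289 : 289 ≤ n)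
    (hb : 3 ≤ b) (hbc : c = b + 1) (hc : 2 * c < n)
    (hzs : n ∣ ∑ i, (![1, 1, c, n - b, n - 3] : Fin 5 → ℕ) i)
    (hmin : ∀ s : Finset (Fin 5), s.Nonempty → s ≠ Finset.univ →
      ¬ n ∣ ∑ i ∈ s, (![1, 1, c, n - b, n - 3] : Fin 5 → ℕ) i) :
    IsLeast {S : ℕ | ∃ m : ℕ, Nat.gcd m n = 1 ∧
        S = lpr n m + lpr n m + lpr n (m * c) + lpr n (m * (n - b)) +
          lpr n (m * (n - 3))}
      (if c = (n - 1) / 2 then 2 * n else n) :=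
  stmt11_aux p μ n b c hp hp7 hμ hn hn289 hb hbc hc
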